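/- Fix k ∈ ℕ. For every H ∈ ℝ and every η > 0 there exists α = α(H,η,k) > 0 such that every probability density g on ℝ^k satisfying ∫ x g(x) dx = 0, ∫ (x⊗x) g(x) dx = I_k, and ∫ g log g dx ≤ H has |ĝ(ξ)| ≤ 1 − α for all ξ ∈ ℝ^k with |ξ| ≥ η. -/

import Mathlib

open MeasureTheory ProbabilityTheory Filter Set Classical
open scoped ENNReal NNReal Topology BigOperators

noncomputable section

/-- The Fourier transform `ĝ(ξ) = ∫ e^{-2πi x·ξ} g(x) dx` on `ℝ^k`. -/
def ft {k : ℕ} (g : (Fin k → ℝ) → ℝ) (ξ : Fin k → ℝ) : ℂ :=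
  ∫ x : Fin k → ℝ,
    Complex.exp (((-2) * Real.pi * (∑ i, x i * ξ i) : ℝ) * Complex.I) * (g x : ℂ)

lemma stmt13aux_mul_log_ineq {u t : ℝ} (hu : 0 ≤ u) (ht : 0 < t) :
    u * Real.log t + (u - t) ≤ u * Real.log u := by
  rcases eq_or_lt_of_le hu with h | h
  · simp [← h]; linarith
  · have h1 : Real.log (t / u) ≤ t / u - 1 := Real.log_le_sub_one_of_pos (by positivity)
    rw [Real.log_div ht.ne' h.ne'] at h1
    have h2 : u * (Real.log t - Real.log u) ≤ u * (t / u - 1) :=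
      mul_le_mul_of_nonneg_left h1 hu
    have h3 : u * (t / u - 1) = t - u := by field_simp
    nlinarith

lemma stmt13aux_gauss_eq (k : ℕ) (x : Fin k → ℝ) : Real.exp (-(∑ i, x i ^ 2) / 2)
    = ∏ i, Real.exp (-(1/2) * (x i) ^ 2) := by
  rw [← Real.exp_sum]
  congr 1
  rw [div_eq_mul_inv, neg_mul, Finset.sum_mul, ← Finset.sum_neg_distrib]
  exact Finset.sum_congr rfl fun i _ => by ring

lemma stmt13aux_gauss_int (k : ℕ) :
    ∫ x : Fin k → ℝ, Real.exp (-(∑ i, x i ^ 2) / 2) = Real.sqrt (2 * Real.pi) ^ k := by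
  simp_rw [stmt13aux_gauss_eq]
  rw [MeasureTheory.integral_fintype_prod_volume_eq_pow (ι := Fin k) (fun t : ℝ => Real.exp (-(1/2) * t ^ 2)),
    integral_gaussian]
  norm_num [Real.sqrt_mul_self, mul_comm]

lemma stmt13aux_gauss_integrable (k : ℕ) :
    Integrable (fun x : Fin k → ℝ => Real.exp (-(∑ i, x i ^ 2) / 2)) := by
  simp_rw [stmt13aux_gauss_eq]
  exact MeasureTheory.Integrable.fintype_prod (f := fun (_ : Fin k) (t : ℝ) =>
    Real.exp (-(1/2) * t ^ 2)) (fun i => integrable_exp_neg_mul_sq (by norm_num))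

/-- entropy-based constant -/
def stmt13auxC1 (k : ℕ) (H : ℝ) : ℝ := |H| + k / 2 + Real.sqrt (2 * Real.pi) ^ k + 1

lemma stmt13aux_C1_nonneg (k : ℕ) (H : ℝ) : 0 ≤ stmt13auxC1 k H := by
  have := abs_nonneg H
  have : (0:ℝ) ≤ Real.sqrt (2 * Real.pi) ^ k := by positivity
  unfold stmt13auxC1
  positivity

lemma stmt13aux_conc {k : ℕ} {H : ℝ} (g : (Fin k → ℝ) → ℝ)
    (hg0 : ∀ x, 0 ≤ g x) (hgi : Integrable g) (hg1 : ∫ x, g x = 1)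
    (hQi : Integrable (fun x => (∑ i, x i ^ 2) * g x))
    (hQ : ∫ x, (∑ i, x i ^ 2) * g x = k)
    (henti : Integrable (fun x => g x * Real.log (g x)))
    (hent : ∫ x, g x * Real.log (g x) ≤ H)
    (S : Set (Fin k → ℝ)) (hS : MeasurableSet S)
    (hvol : volume S ≤ ENNReal.ofReal (Real.exp (-(4 * stmt13auxC1 k H + 4)))) :
    ∫ x in S, g x ≤ 1 / 4 := by
  set m := ∫ x in S, g x with hm
  by_contra hm4
  push_neg at hm4
  have hm0 : (0:ℝ) < m := lt_trans (by norm_num) hm4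
  have hm1 : m ≤ 1 := by
    rw [← hg1]
    exact setIntegral_le_integral hgi (Eventually.of_forall hg0)
  have hSfin : volume S < ⊤ := lt_of_le_of_lt hvol ENNReal.ofReal_lt_top
  have hS0 : volume S ≠ 0 := by
    intro h
    have : m = 0 := by
      rw [hm, Measure.restrict_eq_zero.mpr h, integral_zero_measure]
    linarith
  set δ := (volume S).toReal with hδ
  have hδ0 : 0 < δ := ENNReal.toReal_pos hS0 hSfin.ne
  have hδle : δ ≤ Real.exp (-(4 * stmt13auxC1 k H + 4)) :=
    ENNReal.toReal_le_of_le_ofReal (Real.exp_nonneg _) hvol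
  set t := m / δ with hht
  have ht : 0 < t := div_pos hm0 hδ0
  -- Gibbs inequality on S
  have hconst : IntegrableOn (fun _ : Fin k → ℝ => t) S := by
    exact integrableOn_const hSfin.ne
  have hsubi : IntegrableOn (fun x : Fin k → ℝ => g x - t) S := hgi.integrableOn.sub hconst
  have key1 : m * Real.log t ≤ ∫ x in S, g x * Real.log (g x) := by
    have hle : ∀ x ∈ S, g x * Real.log t + (g x - t) ≤ g x * Real.log (g x) :=
      fun x _ => stmt13aux_mul_log_ineq (hg0 x) ht
    have hi1 : IntegrableOn (fun x => g x * Real.log t + (g x - t)) S := by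
      exact ((hgi.integrableOn.mul_const _).add hsubi)
    have hmono := setIntegral_mono_on hi1 henti.integrableOn hS hle
    have hcomp : ∫ x in S, (g x * Real.log t + (g x - t)) = m * Real.log t := by
      rw [integral_add (hgi.integrableOn.mul_const _) hsubi,
        integral_sub hgi.integrableOn hconst, integral_mul_const, setIntegral_const]
      have : volume.real S • t = m := by
        rw [smul_eq_mul, measureReal_def, ← hδ, hht]
        field_simp
      rw [this, ← hm]
      ring
    linarith [hmono, hcomp.symm.le]
  -- Gaussian comparison on complement
  have key2 : -(k:ℝ)/2 - Real.sqrt (2*Real.pi) ^ k ≤ ∫ x in Sᶜ, g x * Real.log (g x) := by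
    set ψ : (Fin k → ℝ) → ℝ := fun x => Real.exp (-(∑ i, x i ^ 2) / 2) with hψ
    have hψi : Integrable ψ := stmt13aux_gauss_integrable k
    have hQg : Integrable (fun x => (-(∑ i, x i ^ 2) / 2) * g x) := by
      have : (fun x => (-(∑ i, x i ^ 2) / 2) * g x)
          = fun x => (-(1:ℝ)/2) * ((∑ i, x i ^ 2) * g x) := by
        funext x; ring
      rw [this]
      exact hQi.const_mul _
    have hle : ∀ x ∈ Sᶜ, (-(∑ i, x i ^ 2) / 2) * g x + (g x - ψ x)
        ≤ g x * Real.log (g x) := by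
      intro x _
      have := stmt13aux_mul_log_ineq (hg0 x) (Real.exp_pos (-(∑ i, x i ^ 2) / 2))
      rw [Real.log_exp] at this
      linarith [this]
    have hsubi2 : IntegrableOn (fun x : Fin k → ℝ => g x - ψ x) Sᶜ :=
      hgi.integrableOn.sub hψi.integrableOn
    have hi1 : IntegrableOn (fun x => (-(∑ i, x i ^ 2) / 2) * g x + (g x - ψ x)) Sᶜ :=
      (hQg.integrableOn.add hsubi2)
    have hmono := setIntegral_mono_on hi1 henti.integrableOn hS.compl hle
    have hlow : -(k:ℝ)/2 - Real.sqrt (2*Real.pi) ^ k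
        ≤ ∫ x in Sᶜ, ((-(∑ i, x i ^ 2) / 2) * g x + (g x - ψ x)) := by
      rw [integral_add hQg.integrableOn hsubi2,
        integral_sub hgi.integrableOn hψi.integrableOn]
      have h1 : ∫ x in Sᶜ, (-(∑ i, x i ^ 2) / 2) * g x
          = (-1/2) * ∫ x in Sᶜ, (∑ i, x i ^ 2) * g x := by
        rw [← integral_const_mul]
        congr 1; funext x; ring
      have h2 : ∫ x in Sᶜ, (∑ i, x i ^ 2) * g x ≤ k := by
        rw [← hQ]
        exact setIntegral_le_integral hQi (Eventually.of_forall fun x => by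
          have := hg0 x
          have h3 : (0:ℝ) ≤ ∑ i, x i ^ 2 := Finset.sum_nonneg fun i _ => sq_nonneg _
          positivity)
      have h3 : (0:ℝ) ≤ ∫ x in Sᶜ, g x :=
        setIntegral_nonneg hS.compl fun x _ => hg0 x
      have h4 : ∫ x in Sᶜ, ψ x ≤ Real.sqrt (2*Real.pi) ^ k := by
        rw [← stmt13aux_gauss_int k]
        exact setIntegral_le_integral hψi (Eventually.of_forall fun x => Real.exp_nonneg _)
      have h5 : (0:ℝ) ≤ ∫ x in Sᶜ, (∑ i, x i ^ 2) * g x := by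
        apply setIntegral_nonneg hS.compl
        intro x _
        have h3 : (0:ℝ) ≤ ∑ i, x i ^ 2 := Finset.sum_nonneg fun i _ => sq_nonneg _
        have := hg0 x
        positivity
      rw [h1]
      nlinarith
    linarith
  -- combine
  have hsplit := integral_add_compl hS henti
  have hlogm : m - 1 ≤ m * Real.log m := by
    have h1 : Real.log m⁻¹ ≤ m⁻¹ - 1 := Real.log_le_sub_one_of_pos (by positivity)
    rw [Real.log_inv] at h1
    have h2 : m * (-Real.log m) ≤ m * (m⁻¹ - 1) := mul_le_mul_of_nonneg_left h1 hm0.le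
    have h3 : m * (m⁻¹ - 1) = 1 - m := by field_simp
    nlinarith
  have hlogδ : Real.log δ ≤ -(4 * stmt13auxC1 k H + 4) := (Real.log_le_iff_le_exp hδ0).2 hδle
  have hlogt : Real.log t = Real.log m - Real.log δ := Real.log_div hm0.ne' hδ0.ne'
  have hC1 : 0 ≤ stmt13auxC1 k H := stmt13aux_C1_nonneg k H
  have hmld : m * (4 * stmt13auxC1 k H + 4) ≥ (1/4) * (4 * stmt13auxC1 k H + 4) := by nlinarith
  have habs : H ≤ |H| := le_abs_self H
  have hfinal : H < ∫ x, g x * Real.log (g x) := by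
    rw [← hsplit]
    have : m * Real.log t ≥ m * Real.log m + m * (4 * stmt13auxC1 k H + 4) := by
      rw [hlogt, mul_sub]
      nlinarith
    have hC1def : stmt13auxC1 k H = |H| + k / 2 + Real.sqrt (2 * Real.pi) ^ k + 1 := rfl
    nlinarith
  linarith

lemma stmt13aux_slab_vol {k : ℕ} (hk : 0 < k) (ξ : Fin k → ℝ) {L R : ℝ} (hL : 0 < L)
    (hLξ : Real.sqrt (∑ i, ξ i ^ 2) = L) (hR : 0 < R) (T : Set ℝ) (hT : MeasurableSet T) :
    volume {x : Fin k → ℝ | (∑ i, x i ^ 2) ≤ R ^ 2 ∧ (∑ i, x i * ξ i) / L ∈ T}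
      ≤ volume T * (ENNReal.ofReal (2 * R)) ^ (k - 1) := by
  classical
  set i0 : Fin k := ⟨0, hk⟩ with hi0
  set ξ' : EuclideanSpace ℝ (Fin k) := (WithLp.equiv 2 (Fin k → ℝ)).symm ξ with hξ'
  have hξ'norm : ‖ξ'‖ = L := by
    rw [EuclideanSpace.norm_eq, ← hLξ]
    congr 1
    exact Finset.sum_congr rfl fun i _ => by rw [hξ']; simp [sq_abs]
  set u : EuclideanSpace ℝ (Fin k) := L⁻¹ • ξ' with hu'
  have hu : ‖u‖ = 1 := by
    rw [hu', norm_smul, hξ'norm, norm_inv, Real.norm_eq_abs, abs_of_pos hL]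
    field_simp
  set e0 : EuclideanSpace ℝ (Fin k) := EuclideanSpace.single i0 (1:ℝ) with he0'
  have he0 : ‖e0‖ = 1 := by rw [he0', EuclideanSpace.norm_single]; norm_num
  set f : EuclideanSpace ℝ (Fin k) ≃ₗᵢ[ℝ] EuclideanSpace ℝ (Fin k) :=
    Submodule.reflection (ℝ ∙ (u - e0))ᗮ with hf'
  have hfu : f u = e0 := Submodule.reflection_sub (hu.trans he0.symm)
  set me := (MeasurableEquiv.toLp 2 (Fin k → ℝ)).symm with hme
  set W : Set (Fin k → ℝ) := Set.univ.pi fun i => if i = i0 then T else Set.Icc (-R) R with hW'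
  have hW : MeasurableSet W := MeasurableSet.univ_pi fun i => by
    by_cases h : i = i0 <;> simp [h, hT, measurableSet_Icc]
  have hmp : MeasurePreserving (fun x : Fin k → ℝ => me (f (me.symm x))) volume volume :=
    (EuclideanSpace.volume_preserving_symm_measurableEquiv_toLp (Fin k)).comp
      ((f.measurePreserving).comp
        (EuclideanSpace.volume_preserving_symm_measurableEquiv_toLp (Fin k)).symm)
  have hsub : {x : Fin k → ℝ | (∑ i, x i ^ 2) ≤ R ^ 2 ∧ (∑ i, x i * ξ i) / L ∈ T}
      ⊆ (fun x : Fin k → ℝ => me (f (me.symm x))) ⁻¹' W := by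
    rintro x ⟨hx1, hx2⟩
    set y : EuclideanSpace ℝ (Fin k) := me.symm x with hy
    have hyx : ∀ i, y i = x i := fun i => rfl
    have hny : ‖y‖ ≤ R := by
      rw [EuclideanSpace.norm_eq]
      have : (∑ i, ‖y i‖ ^ 2) = ∑ i, x i ^ 2 :=
        Finset.sum_congr rfl fun i _ => by rw [hyx]; simp [sq_abs]
      rw [this]
      calc Real.sqrt (∑ i, x i ^ 2) ≤ Real.sqrt (R ^ 2) := Real.sqrt_le_sqrt hx1
        _ = R := Real.sqrt_sq hR.le
    have hinner : (inner ℝ u y : ℝ) = (∑ i, x i * ξ i) / L := by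
      rw [hu', real_inner_smul_left]
      have : (inner ℝ ξ' y : ℝ) = ∑ i, x i * ξ i := by
        rw [PiLp.inner_apply]
        simp only [RCLike.inner_apply, conj_trivial]
        exact Finset.sum_congr rfl fun i _ => by rw [hyx]; simp [hξ', mul_comm]
      rw [this]
      ring
    simp only [Set.mem_preimage, hW', Set.mem_univ_pi]
    intro i
    have hfy : me (f y) i = (f y) i := rfl
    by_cases h : i = i0
    · rw [if_pos h, hfy, h]
      have h1 : (inner ℝ e0 (f y) : ℝ) = (f y) i0 := by
        rw [he0', EuclideanSpace.inner_single_left]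
        simp
      have h2 : (inner ℝ e0 (f y) : ℝ) = (inner ℝ u y : ℝ) := by
        rw [← hfu, LinearIsometryEquiv.inner_map_map]
      rw [← h1, h2, hinner]
      exact hx2
    · rw [if_neg h, hfy]
      have h1 : |(f y) i| ≤ ‖f y‖ := by
        rw [EuclideanSpace.norm_eq]
        have h2 : |(f y) i| = Real.sqrt (‖(f y) i‖ ^ 2) := by
          rw [Real.sqrt_sq_eq_abs]; simp
        rw [h2]
        exact Real.sqrt_le_sqrt (Finset.single_le_sum
          (fun j _ => sq_nonneg ‖(f y) j‖) (Finset.mem_univ i))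
      have h3 : ‖f y‖ = ‖y‖ := f.norm_map y
      rw [h3] at h1
      have := h1.trans hny
      rw [Set.mem_Icc]
      exact abs_le.1 this
  calc volume {x : Fin k → ℝ | (∑ i, x i ^ 2) ≤ R ^ 2 ∧ (∑ i, x i * ξ i) / L ∈ T}
      ≤ volume ((fun x : Fin k → ℝ => me (f (me.symm x))) ⁻¹' W) := measure_mono hsub
    _ = volume W := hmp.measure_preimage hW.nullMeasurableSet
    _ = ∏ i, volume (if i = i0 then T else Set.Icc (-R) R) := by
        rw [hW', volume_pi_pi]
    _ = volume T * (ENNReal.ofReal (2 * R)) ^ (k - 1) := by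
        rw [← Finset.mul_prod_erase Finset.univ _ (Finset.mem_univ i0), if_pos rfl]
        congr 1
        have h4 : ∀ i ∈ Finset.univ.erase i0,
            volume (if i = i0 then T else Set.Icc (-R) R) = ENNReal.ofReal (2 * R) := by
          intro i hi
          rw [if_neg (Finset.mem_erase.1 hi).1, Real.volume_Icc]
          congr 1
          ring
        rw [Finset.prod_congr rfl h4, Finset.prod_const, Finset.card_erase_of_mem
          (Finset.mem_univ i0), Finset.card_univ, Fintype.card_fin]

lemma stmt13aux_cos_lattice {β s : ℝ} (hβ : 0 < β) (h : 1 - β < Real.cos s) :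
    ∃ n : ℤ, |s - 2 * Real.pi * n| < Real.pi * Real.sqrt β ∧
      |(n : ℝ)| ≤ |s| / (2 * Real.pi) + 1 / 2 := by
  have hπ := Real.pi_pos
  set n : ℤ := round (s / (2 * Real.pi)) with hn
  have hrd : |s / (2 * Real.pi) - n| ≤ 1 / 2 := abs_sub_round _
  refine ⟨n, ?_, ?_⟩
  · set r : ℝ := s - 2 * Real.pi * n with hr
    have hrπ : |r| ≤ Real.pi := by
      have h1 : r = 2 * Real.pi * (s / (2 * Real.pi) - n) := by
        rw [hr]; field_simp
      rw [h1, abs_mul, abs_of_pos (by positivity : (0:ℝ) < 2 * Real.pi)]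
      nlinarith [hrd]
    have hcosr : Real.cos r = Real.cos s := by
      rw [hr, show s - 2 * Real.pi * n = s - (n : ℝ) * (2 * Real.pi) by ring]
      exact Real.cos_sub_int_mul_two_pi s n
    have hj : |r| / Real.pi ≤ Real.sin (|r| / 2) := by
      have := Real.mul_le_sin (x := |r| / 2) (by positivity) (by linarith)
      calc |r| / Real.pi = 2 / Real.pi * (|r| / 2) := by ring
        _ ≤ Real.sin (|r| / 2) := this
    have hsq : Real.sin (|r| / 2) ^ 2 = Real.sin (r / 2) ^ 2 := by
      rcases abs_cases r with ⟨he, _⟩ | ⟨he, _⟩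
      · rw [he]
      · rw [he, show -r / 2 = -(r/2) by ring, Real.sin_neg, neg_sq]
    have hhalf : Real.sin (r / 2) ^ 2 = 1 / 2 - Real.cos r / 2 := by
      rw [Real.sin_sq_eq_half_sub, show 2 * (r / 2) = r by ring]
    have h2 : (|r| / Real.pi) ^ 2 ≤ 1 / 2 - Real.cos r / 2 := by
      rw [← hhalf, ← hsq]
      exact pow_le_pow_left₀ (by positivity) hj 2
    have h3 : r ^ 2 < Real.pi ^ 2 * β / 2 := by
      have h4 : (|r| / Real.pi) ^ 2 = r ^ 2 / Real.pi ^ 2 := by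
        rw [div_pow, sq_abs]
      rw [h4] at h2
      rw [hcosr] at h2
      have h5 : r ^ 2 / Real.pi ^ 2 < β / 2 := by linarith
      calc r ^ 2 = (r ^ 2 / Real.pi ^ 2) * Real.pi ^ 2 := by field_simp
        _ < (β / 2) * Real.pi ^ 2 := mul_lt_mul_of_pos_right h5 (by positivity)
        _ = Real.pi ^ 2 * β / 2 := by ring
    have h6 : (0:ℝ) < Real.pi * Real.sqrt β := by positivity
    have h7 : r ^ 2 < (Real.pi * Real.sqrt β) ^ 2 := by
      rw [mul_pow, Real.sq_sqrt hβ.le]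
      have h8 : 0 < Real.pi ^ 2 * β := by positivity
      calc r ^ 2 < Real.pi ^ 2 * β / 2 := h3
        _ ≤ Real.pi ^ 2 * β := by linarith
    calc |s - 2 * Real.pi * n| = Real.sqrt (r ^ 2) := by rw [Real.sqrt_sq_eq_abs]
      _ < Real.sqrt ((Real.pi * Real.sqrt β) ^ 2) :=
          (Real.sqrt_lt_sqrt (sq_nonneg _) h7)
      _ = Real.pi * Real.sqrt β := Real.sqrt_sq h6.le
  · have : |(n : ℝ)| ≤ |s / (2 * Real.pi)| + |s / (2 * Real.pi) - n| := by
      have := abs_sub_abs_le_abs_sub (s / (2 * Real.pi)) ((n:ℝ))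
      calc |(n : ℝ)| = |s / (2 * Real.pi) - (s / (2 * Real.pi) - n)| := by ring_nf
        _ ≤ |s / (2 * Real.pi)| + |s / (2 * Real.pi) - n| := abs_sub _ _
    rw [abs_div, abs_of_pos (by positivity : (0:ℝ) < 2 * Real.pi)] at this
    linarith [hrd]

lemma stmt13aux_cs {k : ℕ} (x ξ : Fin k → ℝ) :
    |∑ i, x i * ξ i| ≤ Real.sqrt (∑ i, x i ^ 2) * Real.sqrt (∑ i, ξ i ^ 2) := by
  set x' : EuclideanSpace ℝ (Fin k) := (WithLp.equiv 2 (Fin k → ℝ)).symm x with hx'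
  set ξ' : EuclideanSpace ℝ (Fin k) := (WithLp.equiv 2 (Fin k → ℝ)).symm ξ with hξ'
  have h1 : (inner ℝ x' ξ' : ℝ) = ∑ i, x i * ξ i := by
    rw [PiLp.inner_apply]
    simp only [RCLike.inner_apply, conj_trivial]
    exact Finset.sum_congr rfl fun i _ => mul_comm _ _
  have h2 : ‖x'‖ = Real.sqrt (∑ i, x i ^ 2) := by
    rw [EuclideanSpace.norm_eq]
    congr 1
    exact Finset.sum_congr rfl fun i _ => by simp [sq_abs]; rfl
  have h3 : ‖ξ'‖ = Real.sqrt (∑ i, ξ i ^ 2) := by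
    rw [EuclideanSpace.norm_eq]
    congr 1
    exact Finset.sum_congr rfl fun i _ => by simp [sq_abs]; rfl
  have := abs_real_inner_le_norm x' ξ'
  rw [h1, h2, h3] at this
  exact this


set_option maxHeartbeats 1000000 in
/-- uniform decay of characteristic functions away from the origin,
under moment and entropy bounds. -/
theorem stmt13 (k : ℕ) (hk : 0 < k) (H : ℝ) (η : ℝ) (hη : 0 < η) :
    ∃ α : ℝ, 0 < α ∧
    ∀ g : (Fin k → ℝ) → ℝ,
      Measurable g → (∀ x, 0 ≤ g x) → (∫ x, g x = 1) →
      (∀ i, Integrable fun x => x i * g x) → (∀ i, ∫ x, x i * g x = 0) →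
      (∀ i j, Integrable fun x => x i * x j * g x) →
      (∀ i j, ∫ x, x i * x j * g x = if i = j then (1:ℝ) else 0) →
      Integrable (fun x => g x * Real.log (g x)) →
      (∫ x, g x * Real.log (g x) ≤ H) →
      ∀ ξ : Fin k → ℝ, η ≤ Real.sqrt (∑ i, ξ i ^ 2) →
        ‖ft g ξ‖ ≤ 1 - α := by
  have hπ := Real.pi_pos
  have hπ1 : (1:ℝ) ≤ Real.pi := by linarith [Real.pi_gt_three]
  have hk0 : (0:ℝ) < k := Nat.cast_pos.2 hk
  set R : ℝ := 2 * Real.sqrt k with hR'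
  have hR : 0 < R := by
    have := Real.sqrt_pos.2 hk0
    rw [hR']; linarith
  have hR2 : R ^ 2 = 4 * k := by
    rw [hR', mul_pow, Real.sq_sqrt hk0.le]; ring
  set δ0 : ℝ := Real.exp (-(4 * stmt13auxC1 k H + 4)) with hδ0'
  have hδ0 : 0 < δ0 := Real.exp_pos _
  set D : ℝ := (2 * R + 7 / η) * (2 * R) ^ (k - 1) + 1 with hD'
  have hD1 : 0 < 2 * R + 7 / η := by positivity
  have hDpow : 0 < (2 * R) ^ (k - 1) := pow_pos (by linarith) _
  have hD : 0 < D := by rw [hD']; nlinarith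
  set ε : ℝ := δ0 / D with hε'
  have hε : 0 < ε := div_pos hδ0 hD
  set β : ℝ := (ε / Real.pi) ^ 2 with hβ'
  have hβ : 0 < β := by positivity
  have hsqβ : Real.sqrt β = ε / Real.pi := by
    rw [hβ', Real.sqrt_sq (by positivity)]
  set α : ℝ := min (β / 2) (1 / 2) with hα'
  have hα0 : 0 < α := lt_min (by linarith) (by norm_num)
  have hα2 : α ≤ 1 / 2 := min_le_right _ _
  have hαβ : α ≤ β / 2 := min_le_left _ _
  refine ⟨α, hα0, ?_⟩
  intro g hgm hg0 hg1 _ _ hm2i hm2 henti hent ξ hξ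
  have hgi : Integrable g := by
    by_contra hgi
    rw [integral_undef hgi] at hg1
    norm_num at hg1
  set L : ℝ := Real.sqrt (∑ i, ξ i ^ 2) with hL'
  have hL : 0 < L := lt_of_lt_of_le hη hξ
  have hQeq : (fun x : Fin k → ℝ => (∑ i, x i ^ 2) * g x)
      = fun x => ∑ i, x i * x i * g x := by
    funext x
    rw [Finset.sum_mul]
    exact Finset.sum_congr rfl fun i _ => by ring
  have hQi : Integrable (fun x : Fin k → ℝ => (∑ i, x i ^ 2) * g x) := by
    rw [hQeq]; exact integrable_finset_sum _ fun i _ => hm2i i i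
  have hQ : ∫ x : Fin k → ℝ, (∑ i, x i ^ 2) * g x = k := by
    rw [hQeq, integral_finset_sum _ fun i _ => hm2i i i]
    simp [hm2]
  -- dispose of the case ft g ξ = 0
  rcases eq_or_ne (ft g ξ) 0 with hc0 | hc0
  · rw [hc0]
    simp only [norm_zero]
    linarith
  set θ : ℝ := (ft g ξ).arg with hθ'
  have hθπ : |θ| ≤ Real.pi := Complex.abs_arg_le_pi _
  set Sf : (Fin k → ℝ) → ℝ := fun x => ∑ i, x i * ξ i with hSf'
  have hSm : Measurable Sf :=
    Finset.measurable_sum _ fun i _ => (measurable_pi_apply i).mul_const _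
  set F : (Fin k → ℝ) → ℝ := fun x => Real.cos (θ + 2 * Real.pi * Sf x) with hF'
  have hFm : Measurable F :=
    Real.measurable_cos.comp (measurable_const.add (measurable_const.mul hSm))
  have hFgi : Integrable (fun x => F x * g x) := by
    apply Integrable.mono' hgi (Measurable.aestronglyMeasurable (hFm.mul hgm))
    filter_upwards with x
    rw [Real.norm_eq_abs, Pi.mul_apply, abs_mul]
    calc |F x| * |g x| ≤ 1 * |g x| :=
          mul_le_mul_of_nonneg_right (Real.abs_cos_le_one _) (abs_nonneg _)
      _ = g x := by rw [one_mul, abs_of_nonneg (hg0 x)]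
  -- |ft g ξ| = ∫ F g
  have hci : Integrable (fun x : Fin k → ℝ =>
      Complex.exp (((-2) * Real.pi * Sf x : ℝ) * Complex.I) * (g x : ℂ)) := by
    apply Integrable.mono' hgi
    · exact ((Complex.measurable_exp.comp ((Complex.measurable_ofReal.comp
        (measurable_const.mul hSm)).mul_const Complex.I)).mul
        (Complex.measurable_ofReal.comp hgm)).aestronglyMeasurable
    · filter_upwards with x
      rw [norm_mul, Complex.norm_exp_ofReal_mul_I, one_mul, Complex.norm_real,
        Real.norm_eq_abs, abs_of_nonneg (hg0 x)]
  have habs : ‖ft g ξ‖ = ∫ x, F x * g x := by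
    have h1 : (Complex.exp (-(θ:ℂ) * Complex.I)) * ft g ξ
        = ((‖ft g ξ‖ : ℝ) : ℂ) := by
      conv_lhs => rw [← Complex.norm_mul_exp_arg_mul_I (ft g ξ)]
      rw [← hθ', mul_comm ((‖ft g ξ‖ : ℝ) : ℂ), ← mul_assoc,
        ← Complex.exp_add]
      rw [show -(θ:ℂ) * Complex.I + (θ:ℂ) * Complex.I = 0 by ring, Complex.exp_zero, one_mul]
    have h2 : ‖ft g ξ‖
        = (Complex.exp (-(θ:ℂ) * Complex.I) * ft g ξ).re := by
      rw [h1, Complex.ofReal_re]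
    rw [h2]
    have h3 : Complex.exp (-(θ:ℂ) * Complex.I) * ft g ξ
        = ∫ x : Fin k → ℝ, Complex.exp (-(θ:ℂ) * Complex.I) *
          (Complex.exp (((-2) * Real.pi * Sf x : ℝ) * Complex.I) * (g x : ℂ)) := by
      rw [integral_const_mul]
      rfl
    rw [h3, ← RCLike.re_to_complex, ← integral_re (hci.const_mul _)]
    congr 1
    funext x
    rw [← mul_assoc, ← Complex.exp_add]
    rw [show -(θ:ℂ) * Complex.I + ((((-2) * Real.pi * Sf x : ℝ)) : ℂ) * Complex.I
      = ((-(θ + 2 * Real.pi * Sf x) : ℝ) : ℂ) * Complex.I by push_cast; ring]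
    simp only [RCLike.re_to_complex, Complex.mul_re, Complex.exp_ofReal_mul_I_re,
      Complex.exp_ofReal_mul_I_im, Complex.ofReal_re, Complex.ofReal_im, mul_zero, sub_zero,
      Real.cos_neg]
    rfl
  -- Chebyshev bound
  have hQm : Measurable fun x : Fin k → ℝ => ∑ i, x i ^ 2 :=
    Finset.measurable_sum _ fun i _ => (measurable_pi_apply i).pow_const 2
  set A : Set (Fin k → ℝ) := {x | R ^ 2 < ∑ i, x i ^ 2} with hA'
  have hA : MeasurableSet A := measurableSet_lt measurable_const hQm
  have hQg_nonneg : ∀ x : Fin k → ℝ, 0 ≤ (∑ i, x i ^ 2) * g x := fun x =>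
    mul_nonneg (Finset.sum_nonneg fun i _ => sq_nonneg _) (hg0 x)
  have hcheb : ∫ x in A, g x ≤ 1 / 4 := by
    have hch1 : ∀ x ∈ A, g x ≤ (R ^ 2)⁻¹ * ((∑ i, x i ^ 2) * g x) := by
      intro x hx
      have h1 : R ^ 2 < ∑ i, x i ^ 2 := hx
      have h2 := hg0 x
      have h3 : (0:ℝ) < R ^ 2 := by positivity
      have h4 : R ^ 2 * g x ≤ (∑ i, x i ^ 2) * g x := mul_le_mul_of_nonneg_right h1.le h2
      calc g x = (R ^ 2)⁻¹ * (R ^ 2 * g x) := by field_simp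
        _ ≤ (R ^ 2)⁻¹ * ((∑ i, x i ^ 2) * g x) := by
            exact mul_le_mul_of_nonneg_left h4 (by positivity)
    calc ∫ x in A, g x ≤ ∫ x in A, (R ^ 2)⁻¹ * ((∑ i, x i ^ 2) * g x) :=
          setIntegral_mono_on hgi.integrableOn ((hQi.const_mul _).integrableOn) hA hch1
      _ ≤ ∫ x, (R ^ 2)⁻¹ * ((∑ i, x i ^ 2) * g x) :=
          setIntegral_le_integral (hQi.const_mul _)
            (Eventually.of_forall fun x => mul_nonneg (by positivity) (hQg_nonneg x))
      _ = (R ^ 2)⁻¹ * ↑k := by rw [integral_const_mul, hQ]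
      _ = 1 / 4 := by rw [hR2]; field_simp
  -- the bad slab set
  set N : ℕ := ⌈L * R⌉₊ + 2 with hN'
  set εp : ℝ := ε / (2 * Real.pi * L) with hεp'
  have hεp : 0 < εp := by rw [hεp']; positivity
  set T' : Set ℝ := ⋃ n ∈ Finset.Icc (-(N:ℤ)) (N:ℤ),
    Set.Ioo ((2 * Real.pi * n - θ) / (2 * Real.pi * L) - εp)
      ((2 * Real.pi * n - θ) / (2 * Real.pi * L) + εp) with hT''
  have hT'm : MeasurableSet T' :=
    MeasurableSet.biUnion (Finset.Icc (-(N:ℤ)) (N:ℤ)).countable_toSet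
      fun _ _ => measurableSet_Ioo
  set B : Set (Fin k → ℝ) := {x | (∑ i, x i ^ 2) ≤ R ^ 2 ∧ 1 - F x < β} with hB'
  have hB : MeasurableSet B :=
    (measurableSet_le hQm measurable_const).inter
      (measurableSet_lt (measurable_const.sub hFm) measurable_const)
  have hBsub : B ⊆ {x : Fin k → ℝ | (∑ i, x i ^ 2) ≤ R ^ 2 ∧ Sf x / L ∈ T'} := by
    rintro x ⟨hx1, hx2⟩
    refine ⟨hx1, ?_⟩
    have hcos : 1 - β < Real.cos (θ + 2 * Real.pi * Sf x) := by
      have : F x = Real.cos (θ + 2 * Real.pi * Sf x) := rfl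
      linarith [hx2, this]
    obtain ⟨n, hn1, hn2⟩ := stmt13aux_cos_lattice hβ hcos
    have hSfb : |Sf x| ≤ R * L := by
      have h5 := stmt13aux_cs x ξ
      have h6 : Real.sqrt (∑ i, x i ^ 2) ≤ R :=
        Real.sqrt_le_sqrt hx1 |>.trans (by rw [Real.sqrt_sq hR.le])
      calc |Sf x| ≤ Real.sqrt (∑ i, x i ^ 2) * L := by rw [hSf', hL']; exact h5
        _ ≤ R * L := mul_le_mul_of_nonneg_right h6 hL.le
    -- bound on n
    have hsb : |θ + 2 * Real.pi * Sf x| ≤ Real.pi + 2 * Real.pi * (R * L) := by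
      calc |θ + 2 * Real.pi * Sf x| ≤ |θ| + |2 * Real.pi * Sf x| := abs_add_le _ _
        _ ≤ Real.pi + 2 * Real.pi * (R * L) := by
            rw [abs_mul, abs_of_pos (by positivity : (0:ℝ) < 2 * Real.pi)]
            have := mul_le_mul_of_nonneg_left hSfb (by positivity : (0:ℝ) ≤ 2 * Real.pi)
            linarith
    have hnR : |(n:ℝ)| ≤ L * R + 1 := by
      have h7 : |θ + 2 * Real.pi * Sf x| / (2 * Real.pi) ≤ 1 / 2 + R * L := by
        rw [div_le_iff₀ (by positivity : (0:ℝ) < 2 * Real.pi)]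
        calc |θ + 2 * Real.pi * Sf x| ≤ Real.pi + 2 * Real.pi * (R * L) := hsb
          _ = (1 / 2 + R * L) * (2 * Real.pi) := by ring
      calc |(n:ℝ)| ≤ |θ + 2 * Real.pi * Sf x| / (2 * Real.pi) + 1 / 2 := hn2
        _ ≤ L * R + 1 := by linarith [mul_comm L R, h7]
    have hnN : n ∈ Finset.Icc (-(N:ℤ)) (N:ℤ) := by
      have h8 : (N:ℝ) ≥ L * R + 1 := by
        rw [hN']
        push_cast
        linarith [Nat.le_ceil (L * R)]
      have h9 : |(n:ℝ)| ≤ (N:ℝ) := hnR.trans h8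
      rw [Finset.mem_Icc]
      have h10 := abs_le.1 h9
      constructor
      · exact_mod_cast h10.1
      · exact_mod_cast h10.2
    -- membership in the interval
    have hdist : |Sf x / L - (2 * Real.pi * n - θ) / (2 * Real.pi * L)| < εp := by
      have h11 : Sf x / L - (2 * Real.pi * n - θ) / (2 * Real.pi * L)
          = ((θ + 2 * Real.pi * Sf x) - 2 * Real.pi * n) / (2 * Real.pi * L) := by
        field_simp
        ring
      have h12 : |(θ + 2 * Real.pi * Sf x) - 2 * Real.pi * n| < ε := by
        have := hn1
        rw [hsqβ] at this
        calc |(θ + 2 * Real.pi * Sf x) - 2 * Real.pi * n| < Real.pi * (ε / Real.pi) := this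
          _ = ε := by field_simp
      rw [h11, abs_div, abs_of_pos (by positivity : (0:ℝ) < 2 * Real.pi * L), hεp']
      gcongr
    rw [hT'']
    simp only [Set.mem_iUnion, Set.mem_Ioo, exists_prop]
    refine ⟨n, hnN, ?_, ?_⟩
    · linarith [abs_lt.1 hdist |>.1]
    · linarith [abs_lt.1 hdist |>.2]
  -- volume of the bad set
  have hNup : (N:ℝ) ≤ L * R + 3 := by
    rw [hN']
    push_cast
    linarith [(Nat.ceil_lt_add_one (by positivity : (0:ℝ) ≤ L * R))]
  have hvolT' : volume T' ≤ ENNReal.ofReal ((2 * (N:ℝ) + 1) * (2 * εp)) := by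
    have hcard : (Finset.Icc (-(N:ℤ)) (N:ℤ)).card = 2 * N + 1 := by
      rw [Int.card_Icc]; omega
    calc volume T' ≤ ∑ n ∈ Finset.Icc (-(N:ℤ)) (N:ℤ),
          volume (Set.Ioo ((2 * Real.pi * n - θ) / (2 * Real.pi * L) - εp)
            ((2 * Real.pi * n - θ) / (2 * Real.pi * L) + εp)) := by
          rw [hT'']
          exact measure_biUnion_finset_le _ _
      _ = ∑ _n ∈ Finset.Icc (-(N:ℤ)) (N:ℤ), ENNReal.ofReal (2 * εp) := by
          refine Finset.sum_congr rfl fun n _ => ?_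
          rw [Real.volume_Ioo]
          congr 1
          ring
      _ = ((2 * N + 1 : ℕ) : ℝ≥0∞) * ENNReal.ofReal (2 * εp) := by
          rw [Finset.sum_const, hcard, nsmul_eq_mul]
      _ = ENNReal.ofReal ((2 * (N:ℝ) + 1) * (2 * εp)) := by
          rw [ENNReal.ofReal_mul (by positivity : (0:ℝ) ≤ 2 * (N:ℝ) + 1)]
          congr 1
          rw [show (2 * (N:ℝ) + 1) = ((2 * N + 1 : ℕ) : ℝ) by push_cast; ring,
            ENNReal.ofReal_natCast]
  have hreal : (2 * (N:ℝ) + 1) * (2 * εp) * (2 * R) ^ (k - 1) ≤ δ0 := by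
    have h2εp : 2 * εp = ε / (Real.pi * L) := by rw [hεp']; field_simp
    have hstep1 : (2 * (N:ℝ) + 1) * (2 * εp) ≤ (2 * R + 7 / η) * ε := by
      rw [h2εp]
      have ha : (2 * (N:ℝ) + 1) ≤ 2 * L * R + 7 := by linarith
      have hb : (2 * (N:ℝ) + 1) * (ε / (Real.pi * L)) ≤ (2 * L * R + 7) * (ε / (Real.pi * L)) :=
        mul_le_mul_of_nonneg_right ha (div_nonneg hε.le (by positivity))
      have hc : (2 * L * R + 7) * (ε / (Real.pi * L)) = (2 * R + 7 / L) * (ε / Real.pi) := by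
        field_simp
      have hd : (2 * R + 7 / L) * (ε / Real.pi) ≤ (2 * R + 7 / η) * ε := by
        apply mul_le_mul ?_ ?_ (div_nonneg hε.le hπ.le) hD1.le
        · have : 7 / L ≤ 7 / η := by gcongr
          linarith
        · exact div_le_self hε.le hπ1
      linarith [hb, hc ▸ hb, hd]
    have hstep2 : (2 * (N:ℝ) + 1) * (2 * εp) * (2 * R) ^ (k - 1)
        ≤ (2 * R + 7 / η) * ε * (2 * R) ^ (k - 1) :=
      mul_le_mul_of_nonneg_right hstep1 hDpow.le
    have hstep3 : (2 * R + 7 / η) * ε * (2 * R) ^ (k - 1) = (D - 1) * ε := by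
      rw [hD']
      ring
    have hstep4 : (D - 1) * ε ≤ D * ε := by nlinarith
    have hstep5 : D * ε = δ0 := by
      rw [hε', mul_comm, div_mul_cancel₀ _ hD.ne']
    calc (2 * (N:ℝ) + 1) * (2 * εp) * (2 * R) ^ (k - 1)
        ≤ (2 * R + 7 / η) * ε * (2 * R) ^ (k - 1) := hstep2
      _ = (D - 1) * ε := hstep3
      _ ≤ D * ε := hstep4
      _ = δ0 := hstep5
  have hvolB : volume B ≤ ENNReal.ofReal (Real.exp (-(4 * stmt13auxC1 k H + 4))) := by
    rw [← hδ0']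
    calc volume B ≤ volume {x : Fin k → ℝ | (∑ i, x i ^ 2) ≤ R ^ 2 ∧ Sf x / L ∈ T'} :=
          measure_mono hBsub
      _ ≤ volume T' * (ENNReal.ofReal (2 * R)) ^ (k - 1) :=
          stmt13aux_slab_vol hk ξ hL hL'.symm hR T' hT'm
      _ ≤ ENNReal.ofReal ((2 * (N:ℝ) + 1) * (2 * εp)) * (ENNReal.ofReal (2 * R)) ^ (k - 1) :=
          mul_le_mul_left hvolT' _
      _ = ENNReal.ofReal ((2 * (N:ℝ) + 1) * (2 * εp) * (2 * R) ^ (k - 1)) := by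
          rw [← ENNReal.ofReal_pow (by linarith : (0:ℝ) ≤ 2 * R),
            ← ENNReal.ofReal_mul (by positivity)]
      _ ≤ ENNReal.ofReal δ0 := ENNReal.ofReal_le_ofReal hreal
  have hconcB : ∫ x in B, g x ≤ 1 / 4 :=
    stmt13aux_conc g hg0 hgi hg1 hQi hQ henti hent B hB hvolB
  -- the good set
  set Good : Set (Fin k → ℝ) := {x | (∑ i, x i ^ 2) ≤ R ^ 2 ∧ β ≤ 1 - F x} with hGood'
  have hGoodm : MeasurableSet Good :=
    (measurableSet_le hQm measurable_const).inter
      (measurableSet_le measurable_const (measurable_const.sub hFm))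
  have hcompl : Goodᶜ ⊆ A ∪ B := by
    intro x hx
    by_cases hq : (∑ i, x i ^ 2) ≤ R ^ 2
    · right
      refine ⟨hq, ?_⟩
      by_contra hcon
      push_neg at hcon
      exact hx ⟨hq, hcon⟩
    · left
      exact not_le.1 hq
  have hAB : ∫ x in A ∪ B, g x ≤ 1 / 2 := by
    rw [← Set.union_diff_self,
      setIntegral_union disjoint_sdiff_self_right (hB.diff hA)
        hgi.integrableOn hgi.integrableOn]
    have h6 : ∫ x in B \ A, g x ≤ ∫ x in B, g x :=
      setIntegral_mono_set hgi.integrableOn (ae_of_all _ hg0)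
        (HasSubset.Subset.eventuallyLE Set.diff_subset)
    linarith
  have hGoodint : 1 / 2 ≤ ∫ x in Good, g x := by
    have h7 := integral_add_compl hGoodm hgi
    rw [hg1] at h7
    have h8 : ∫ x in Goodᶜ, g x ≤ ∫ x in A ∪ B, g x :=
      setIntegral_mono_set hgi.integrableOn (ae_of_all _ hg0)
        (HasSubset.Subset.eventuallyLE hcompl)
    linarith
  -- conclusion
  have h1Feq : (fun x => (1 - F x) * g x) = fun x => g x - F x * g x :=
    funext fun x => by ring
  have h1Fgi : Integrable (fun x => (1 - F x) * g x) := by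
    rw [h1Feq]; exact hgi.sub hFgi
  have hF1 : ∀ x, 0 ≤ (1 - F x) * g x := fun x =>
    mul_nonneg (by
      have := Real.cos_le_one (θ + 2 * Real.pi * Sf x)
      have hFx : F x = Real.cos (θ + 2 * Real.pi * Sf x) := rfl
      linarith) (hg0 x)
  have hchain : β / 2 ≤ ∫ x, (1 - F x) * g x := by
    calc β / 2 = β * (1 / 2) := by ring
      _ ≤ β * ∫ x in Good, g x := mul_le_mul_of_nonneg_left hGoodint hβ.le
      _ = ∫ x in Good, β * g x := (integral_const_mul β _).symm
      _ ≤ ∫ x in Good, (1 - F x) * g x :=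
          setIntegral_mono_on (hgi.integrableOn.const_mul β) h1Fgi.integrableOn hGoodm
            (fun x hx => mul_le_mul_of_nonneg_right hx.2 (hg0 x))
      _ ≤ ∫ x, (1 - F x) * g x :=
          setIntegral_le_integral h1Fgi (Eventually.of_forall hF1)
  have hfin : ∫ x, (1 - F x) * g x = 1 - ∫ x, F x * g x := by
    rw [h1Feq, integral_sub hgi hFgi, hg1]
  rw [habs]
  rw [hfin] at hchain
  linarith

end
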